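/- Let μ > 0 and let ψ : [0, ∞) → ℓ² be a solution of the AL lattice. Then for every t ≥ 0 the solution satisfies the estimate μ ‖ψ(t)‖_{ℓ²}² = μ Σ_{n∈ℤ} |ψ_n(t)|² ≤ exp(P_μ(ψ(0))) − 1. -/

import Mathlib

open Set

noncomputable section

/-- The Hilbert space ℓ² of square-summable sequences of complex numbers indexed by ℤ. -/
abbrev l2 : Type := lp (fun _ : ℤ => ℂ) 2

/-- `ψ : I → ℓ²` is a solution of the Ablowitz–Ladik lattice
`i ψ̇ₙ + (ψₙ₊₁ + ψₙ₋₁) + μ|ψₙ|²(ψₙ₊₁ + ψₙ₋₁) = 0` on the set `s`, with derivative curve `ψ'`: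
it is continuously differentiable and satisfies the equation componentwise. -/
def IsALSol (μ : ℝ) (s : Set ℝ) (ψ ψ' : ℝ → l2) : Prop :=
  (∀ t ∈ s, HasDerivWithinAt ψ (ψ' t) s t) ∧ ContinuousOn ψ' s ∧
    ∀ t ∈ s, ∀ n : ℤ,
      Complex.I * (ψ' t) n + ((ψ t) (n + 1) + (ψ t) (n - 1))
        + (μ * ‖(ψ t) n‖ ^ 2 : ℝ) * ((ψ t) (n + 1) + (ψ t) (n - 1)) = 0

/-- The deformed power `P_μ(ψ) = Σₙ ln(1 + μ|ψₙ|²)`. -/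
def Pdef (μ : ℝ) (ψ : l2) : ℝ := ∑' n : ℤ, Real.log (1 + μ * ‖ψ n‖ ^ 2)

namespace ALaux

open Filter Topology

/-- Evaluation at a coordinate, as a continuous linear map. -/
def ev (n : ℤ) : l2 →L[ℂ] ℂ :=
  LinearMap.mkContinuous
    { toFun := fun f => f n
      map_add' := fun f g => congrFun (lp.coeFn_add f g) n
      map_smul' := fun c f => congrFun (lp.coeFn_smul c f) n }
    1 (fun f => by simpa using lp.norm_apply_le_norm (by norm_num) f n)

lemma sq_summable (φ : l2) : Summable fun n : ℤ => ‖φ n‖ ^ 2 := by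
  have := lp.memℓp φ
  rw [memℓp_gen_iff (by norm_num)] at this
  simpa [Real.rpow_natCast] using this

lemma norm_sq_eq (φ : l2) : ‖φ‖ ^ 2 = ∑' n : ℤ, ‖φ n‖ ^ 2 := by
  have := lp.norm_rpow_eq_tsum (p := 2) (by norm_num) φ
  simpa [Real.rpow_natCast] using this

lemma normsq_c (z : ℂ) : ‖z‖ ^ 2 = z.re ^ 2 + z.im ^ 2 := by
  rw [Complex.sq_norm, Complex.normSq_apply]; ring

lemma log_term_nonneg (μ : ℝ) (hμ : 0 < μ) (x : ℝ) (hx : 0 ≤ x) :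
    0 ≤ Real.log (1 + μ * x) :=
  Real.log_nonneg (by nlinarith)

lemma log_term_le (μ : ℝ) (hμ : 0 < μ) (x : ℝ) (hx : 0 ≤ x) :
    Real.log (1 + μ * x) ≤ μ * x := by
  have := Real.log_le_sub_one_of_pos (x := 1 + μ * x) (by nlinarith)
  linarith

lemma summable_log (μ : ℝ) (hμ : 0 < μ) (φ : l2) :
    Summable fun n : ℤ => Real.log (1 + μ * ‖φ n‖ ^ 2) :=
  Summable.of_nonneg_of_le
    (fun n => log_term_nonneg μ hμ _ (by positivity))
    (fun n => log_term_le μ hμ _ (by positivity))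
    ((sq_summable φ).mul_left μ)

lemma partA (μ : ℝ) (hμ : 0 < μ) (φ : l2) :
    μ * ‖φ‖ ^ 2 ≤ Real.exp (Pdef μ φ) - 1 := by
  have hsum : Summable (fun n : ℤ => μ * ‖φ n‖ ^ 2) := (sq_summable φ).mul_left μ
  have hlog := summable_log μ hμ φ
  have key : ∀ F : Finset ℤ, ∑ n ∈ F, μ * ‖φ n‖ ^ 2 ≤ Real.exp (Pdef μ φ) - 1 := by
    intro F
    have h1 : 1 + ∑ n ∈ F, μ * ‖φ n‖ ^ 2 ≤ ∏ n ∈ F, (1 + μ * ‖φ n‖ ^ 2) := by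
      classical
      induction F using Finset.cons_induction with
      | empty => simp
      | cons a s ha ih =>
        rw [Finset.sum_cons, Finset.prod_cons]
        have hs : 0 ≤ ∑ n ∈ s, μ * ‖φ n‖ ^ 2 :=
          Finset.sum_nonneg fun n _ => by positivity
        have ha2 : (0:ℝ) ≤ μ * ‖φ a‖ ^ 2 := by positivity
        nlinarith [ih]
    have h2 : ∏ n ∈ F, (1 + μ * ‖φ n‖ ^ 2)
        = Real.exp (∑ n ∈ F, Real.log (1 + μ * ‖φ n‖ ^ 2)) := by
      rw [Real.exp_sum]
      exact Finset.prod_congr rfl fun n _ => (Real.exp_log (by positivity)).symm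
    have h3 : ∑ n ∈ F, Real.log (1 + μ * ‖φ n‖ ^ 2) ≤ Pdef μ φ :=
      Summable.sum_le_tsum F (fun n _ => log_term_nonneg μ hμ _ (by positivity)) hlog
    have h4 : Real.exp (∑ n ∈ F, Real.log (1 + μ * ‖φ n‖ ^ 2)) ≤ Real.exp (Pdef μ φ) :=
      Real.exp_le_exp.2 h3
    linarith
  have := Summable.tsum_le_of_sum_le hsum key
  calc μ * ‖φ‖ ^ 2 = ∑' n : ℤ, μ * ‖φ n‖ ^ 2 := by
        rw [norm_sq_eq, tsum_mul_left]
    _ ≤ Real.exp (Pdef μ φ) - 1 := this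

/-- The boundary current. -/
def bb (μ : ℝ) (ψ : ℝ → l2) (m : ℤ) (s : ℝ) : ℝ :=
  -2 * μ * ((starRingEnd ℂ) ((ψ s) m) * (ψ s) (m + 1)).im

lemma term_deriv (μ : ℝ) (hμ : 0 < μ) (ψ ψ' : ℝ → l2) (hψ : IsALSol μ (Ici 0) ψ ψ')
    (s : ℝ) (hs : s ∈ Ici (0:ℝ)) (n : ℤ) :
    HasDerivWithinAt (fun r => Real.log (1 + μ * ‖(ψ r) n‖ ^ 2))
      (bb μ ψ n s - bb μ ψ (n - 1) s) (Ici 0) s := by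
  obtain ⟨hd, hc, heq⟩ := hψ
  have hu : HasDerivWithinAt (fun r => (ψ r) n) ((ψ' s) n) (Ici 0) s :=
    ((ev n).restrictScalars ℝ).hasFDerivAt.comp_hasDerivWithinAt s (hd s hs)
  have hre : HasDerivWithinAt (fun r => ((ψ r) n).re) ((ψ' s) n).re (Ici 0) s :=
    Complex.reCLM.hasFDerivAt.comp_hasDerivWithinAt s hu
  have him : HasDerivWithinAt (fun r => ((ψ r) n).im) ((ψ' s) n).im (Ici 0) s :=
    Complex.imCLM.hasFDerivAt.comp_hasDerivWithinAt s hu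
  set u := (ψ s) n with hu_def
  set d := (ψ' s) n with hd_def
  have hq : HasDerivWithinAt
      (fun r => 1 + μ * (((ψ r) n).re ^ 2 + ((ψ r) n).im ^ 2))
      (μ * (2 * u.re * d.re + 2 * u.im * d.im)) (Ici 0) s := by
    have h1 := ((hre.fun_pow 2).fun_add (him.fun_pow 2)).const_mul μ |>.const_add 1
    exact h1.congr_deriv (by ring)
  have hpos : 0 < 1 + μ * (u.re ^ 2 + u.im ^ 2) := by positivity
  have hlog := hq.log (ne_of_gt hpos)
  have hfun : (fun r => Real.log (1 + μ * ‖(ψ r) n‖ ^ 2))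
      = (fun r => Real.log (1 + μ * (((ψ r) n).re ^ 2 + ((ψ r) n).im ^ 2))) := by
    funext r; rw [normsq_c]
  rw [hfun]
  convert hlog using 1
  -- now prove the value identity
  set A := (ψ s) (n + 1) + (ψ s) (n - 1) with hA
  have heqn := heq s hs n
  have hcc : ((μ * ‖u‖ ^ 2 : ℝ) : ℂ) = ((μ * (u.re ^ 2 + u.im ^ 2) : ℝ) : ℂ) := by
    rw [normsq_c]
  rw [← hA, ← hd_def, ← hu_def, hcc] at heqn
  have hd' : d = Complex.I * (1 + ((μ * (u.re ^ 2 + u.im ^ 2) : ℝ) : ℂ)) * A := by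
    linear_combination (-Complex.I) * heqn + d * Complex.I_sq
  have h1 : d.re = -((1 + μ * (u.re ^ 2 + u.im ^ 2)) * A.im) := by
    rw [hd']
    simp only [Complex.mul_re, Complex.mul_im, Complex.add_re, Complex.add_im,
      Complex.I_re, Complex.I_im, Complex.ofReal_re, Complex.ofReal_im,
      Complex.one_re, Complex.one_im]
    ring
  have h2 : d.im = (1 + μ * (u.re ^ 2 + u.im ^ 2)) * A.re := by
    rw [hd']
    simp only [Complex.mul_re, Complex.mul_im, Complex.add_re, Complex.add_im,
      Complex.I_re, Complex.I_im, Complex.ofReal_re, Complex.ofReal_im,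
      Complex.one_re, Complex.one_im]
    ring
  have hne : (1 + μ * (u.re ^ 2 + u.im ^ 2)) ≠ 0 := ne_of_gt hpos
  have hn1 : n - 1 + 1 = n := by ring
  rw [bb, bb, hn1, h1, h2, ← hu_def]
  field_simp
  simp only [hA, Complex.add_re, Complex.add_im, Complex.mul_im,
    RingHomCompTriple.comp_apply, Complex.conj_re, Complex.conj_im]
  ring

lemma telesc (g : ℤ → ℝ) (N : ℕ) :
    ∑ n ∈ Finset.Icc (-(N:ℤ)) (N:ℤ), (g n - g (n - 1)) = g (N:ℤ) - g (-(N:ℤ) - 1) := by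
  have hmap : Finset.Icc (-(N:ℤ)) (N:ℤ)
      = (Finset.range (2 * N + 1)).map
          (⟨fun k : ℕ => (k : ℤ) - N, by intro a b h; have h' : (a:ℤ) - N = (b:ℤ) - N := h; omega⟩ : ℕ ↪ ℤ) := by
    ext x
    simp only [Finset.mem_Icc, Finset.mem_map, Finset.mem_range,
      Function.Embedding.coeFn_mk]
    constructor
    · intro h; exact ⟨(x + N).toNat, by omega, show ((x + N).toNat : ℤ) - N = x by omega⟩
    · rintro ⟨a, ha, rfl⟩; show -(N:ℤ) ≤ (a:ℤ) - N ∧ (a:ℤ) - N ≤ N; omega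
  rw [hmap, Finset.sum_map]
  show ∑ x ∈ Finset.range (2 * N + 1), (g ((x:ℤ) - N) - g ((x:ℤ) - N - 1)) = g N - g (-(N:ℤ) - 1)
  have h2 : ∀ k ∈ Finset.range (2 * N + 1),
      g ((k:ℤ) - N) - g ((k:ℤ) - N - 1)
        = (fun m : ℕ => g ((m:ℤ) - N - 1)) (k + 1) - (fun m : ℕ => g ((m:ℤ) - N - 1)) k := by
    intro k _
    simp only
    congr 2
    push_cast; ring
  rw [Finset.sum_congr rfl h2, Finset.sum_range_sub (fun m : ℕ => g ((m:ℤ) - N - 1))]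
  congr 2 <;> push_cast <;> ring

lemma tendsto_IccZ :
    Tendsto (fun N : ℕ => Finset.Icc (-(N:ℤ)) (N:ℤ)) atTop atTop := by
  apply tendsto_atTop_finset_of_monotone
  · intro a b hab
    exact Finset.Icc_subset_Icc (by exact_mod_cast neg_le_neg (Int.ofNat_le.2 hab))
      (by exact_mod_cast hab)
  · intro x
    exact ⟨x.natAbs, by simp only [Finset.mem_Icc]; omega⟩

set_option maxHeartbeats 2000000 in
lemma conserve (μ : ℝ) (hμ : 0 < μ) (ψ ψ' : ℝ → l2) (hψ : IsALSol μ (Ici 0) ψ ψ')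
    (t : ℝ) (ht : 0 ≤ t) : Pdef μ (ψ t) = Pdef μ (ψ 0) := by
  obtain ⟨hd, hc, heq⟩ := hψ
  have hψcont : ContinuousOn ψ (Ici 0) := fun s hs => (hd s hs).continuousWithinAt
  have hcomp : ∀ n : ℤ, ContinuousOn (fun s => (ψ s) n) (Ici 0) := fun n =>
    ((ev n).restrictScalars ℝ).continuous.comp_continuousOn hψcont
  have hbbcont : ∀ m : ℤ, ContinuousOn (fun s => bb μ ψ m s) (Ici 0) := by
    intro m
    apply ContinuousOn.mul continuousOn_const
    exact Complex.continuous_im.comp_continuousOn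
      ((Complex.continuous_conj.comp_continuousOn (hcomp m)).mul (hcomp (m + 1)))
  set F : ℕ → ℝ → ℝ :=
    fun N s => ∑ n ∈ Finset.Icc (-(N:ℤ)) (N:ℤ), Real.log (1 + μ * ‖(ψ s) n‖ ^ 2) with hF
  have hFderiv : ∀ N : ℕ, ∀ s ∈ Ici (0:ℝ),
      HasDerivWithinAt (F N) (bb μ ψ (N:ℤ) s - bb μ ψ (-(N:ℤ) - 1) s) (Ici 0) s := by
    intro N s hs
    have h := HasDerivWithinAt.fun_sum
      (fun n (_ : n ∈ Finset.Icc (-(N:ℤ)) (N:ℤ)) =>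
        term_deriv μ hμ ψ ψ' ⟨hd, hc, heq⟩ s hs n)
    rwa [telesc (fun m => bb μ ψ m s) N] at h
  have hFTC : ∀ N : ℕ,
      (∫ s in (0:ℝ)..t, (bb μ ψ (N:ℤ) s - bb μ ψ (-(N:ℤ) - 1) s)) = F N t - F N 0 := by
    intro N
    apply intervalIntegral.integral_eq_sub_of_hasDeriv_right_of_le ht
    · exact fun s hs => ((hFderiv N s (Icc_subset_Ici_self hs)).continuousWithinAt).mono
        Icc_subset_Ici_self
    · intro x hx
      exact (hFderiv N x (le_of_lt hx.1)).mono fun y hy => le_of_lt (lt_trans hx.1 hy)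
    · apply ContinuousOn.intervalIntegrable
      rw [uIcc_of_le ht]
      exact (((hbbcont _).sub (hbbcont _))).mono Icc_subset_Ici_self
  -- bound on bb
  have hbb_bound : ∀ s : ℝ, ∀ m : ℤ, |bb μ ψ m s| ≤ 2 * μ * (‖(ψ s) m‖ * ‖(ψ s) (m + 1)‖) := by
    intro s m
    have h1 : |((starRingEnd ℂ) ((ψ s) m) * (ψ s) (m + 1)).im|
        ≤ ‖(ψ s) m‖ * ‖(ψ s) (m + 1)‖ := by
      calc |((starRingEnd ℂ) ((ψ s) m) * (ψ s) (m + 1)).im|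
          ≤ ‖(starRingEnd ℂ) ((ψ s) m) * (ψ s) (m + 1)‖ := Complex.abs_im_le_norm _
        _ = ‖(ψ s) m‖ * ‖(ψ s) (m + 1)‖ := by rw [norm_mul, RCLike.norm_conj]
    have : |bb μ ψ m s| = 2 * μ * |((starRingEnd ℂ) ((ψ s) m) * (ψ s) (m + 1)).im| := by
      rw [bb, abs_mul]
      congr 1
      rw [abs_of_nonpos (by linarith), neg_mul]
      ring
    rw [this]
    have h2μ : (0:ℝ) ≤ 2 * μ := by linarith
    exact mul_le_mul_of_nonneg_left h1 h2μ
  have hbb_bound' : ∀ s : ℝ, ∀ m : ℤ, |bb μ ψ m s| ≤ 2 * μ * ‖ψ s‖ ^ 2 := by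
    intro s m
    refine (hbb_bound s m).trans ?_
    have e1 : ‖(ψ s) m‖ ≤ ‖ψ s‖ := lp.norm_apply_le_norm (by norm_num) _ _
    have e2 : ‖(ψ s) (m + 1)‖ ≤ ‖ψ s‖ := lp.norm_apply_le_norm (by norm_num) _ _
    have h2μ : (0:ℝ) ≤ 2 * μ := by linarith
    have := mul_le_mul e1 e2 (norm_nonneg _) (norm_nonneg _)
    nlinarith [norm_nonneg ((ψ s) m), norm_nonneg (ψ s)]
  -- pointwise convergence to 0
  have hkey : ∀ s : ℝ,
      Tendsto (fun N : ℕ => bb μ ψ (N:ℤ) s - bb μ ψ (-(N:ℤ) - 1) s) atTop (𝓝 0) := by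
    intro s
    have hz : Tendsto (fun n : ℤ => ‖(ψ s) n‖) cofinite (𝓝 0) := by
      have h0 := (sq_summable (ψ s)).tendsto_cofinite_zero
      have h2 : Tendsto (fun n : ℤ => Real.sqrt (‖(ψ s) n‖ ^ 2)) cofinite (𝓝 (Real.sqrt 0)) :=
        (Real.continuous_sqrt.continuousAt).tendsto.comp h0
      simpa [Real.sqrt_sq (norm_nonneg _)] using h2
    have hb : ∀ k : ℕ → ℤ, Function.Injective k →
        Tendsto (fun N : ℕ => bb μ ψ (k N) s) atTop (𝓝 0) := by
      intro k hk
      have hkc : Tendsto k atTop cofinite := by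
        rw [← Nat.cofinite_eq_atTop]; exact hk.tendsto_cofinite
      have hk1 : Function.Injective (fun N : ℕ => k N + 1) := by
        intro a b h
        have h' : k a + 1 = k b + 1 := h
        exact hk (by omega)
      have hkc1 : Tendsto (fun N : ℕ => k N + 1) atTop cofinite := by
        rw [← Nat.cofinite_eq_atTop]; exact hk1.tendsto_cofinite
      have t1 : Tendsto (fun N : ℕ => ‖(ψ s) (k N)‖) atTop (𝓝 0) := hz.comp hkc
      have t2 : Tendsto (fun N : ℕ => ‖(ψ s) (k N + 1)‖) atTop (𝓝 0) := hz.comp hkc1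
      have t3 : Tendsto (fun N : ℕ => 2 * μ * (‖(ψ s) (k N)‖ * ‖(ψ s) (k N + 1)‖))
          atTop (𝓝 0) := by
        have := (t1.mul t2).const_mul (2 * μ)
        simpa using this
      apply squeeze_zero_norm (fun N => ?_) t3
      simpa [Real.norm_eq_abs] using hbb_bound s (k N)
    have hb1 := hb (fun N : ℕ => (N:ℤ)) (by
      intro a b h
      have h' : (a:ℤ) = (b:ℤ) := h
      omega)
    have hb2 := hb (fun N : ℕ => -(N:ℤ) - 1) (by
      intro a b h
      have h' : -(a:ℤ) - 1 = -(b:ℤ) - 1 := h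
      omega)
    simpa using hb1.sub hb2
  -- dominated convergence
  have hlim0 : Tendsto
      (fun N : ℕ => ∫ s in (0:ℝ)..t, (bb μ ψ (N:ℤ) s - bb μ ψ (-(N:ℤ) - 1) s))
      atTop (𝓝 0) := by
    have hsub : uIoc (0:ℝ) t ⊆ Ici (0:ℝ) := by
      rw [uIoc_of_le ht]; exact Ioc_subset_Icc_self.trans Icc_subset_Ici_self
    have hmain : Tendsto
        (fun N : ℕ => ∫ s in (0:ℝ)..t, (bb μ ψ (N:ℤ) s - bb μ ψ (-(N:ℤ) - 1) s))
        atTop (𝓝 (∫ s in (0:ℝ)..t, (0:ℝ))) := by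
      apply intervalIntegral.tendsto_integral_filter_of_dominated_convergence
        (F := fun (N : ℕ) (s : ℝ) => bb μ ψ (N:ℤ) s - bb μ ψ (-(N:ℤ) - 1) s)
        (f := fun _ : ℝ => (0:ℝ)) (μ := MeasureTheory.volume)
        (bound := fun s => 4 * μ * ‖ψ s‖ ^ 2)
      · filter_upwards with N
        apply ContinuousOn.aestronglyMeasurable _ measurableSet_uIoc
        exact (((hbbcont _).sub (hbbcont _))).mono hsub
      · filter_upwards with N
        filter_upwards with x
        intro hx
        have h1 := hbb_bound' x (N:ℤ)
        have h2 := hbb_bound' x (-(N:ℤ) - 1)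
        rw [Real.norm_eq_abs]
        calc |bb μ ψ (N:ℤ) x - bb μ ψ (-(N:ℤ) - 1) x|
            ≤ |bb μ ψ (N:ℤ) x| + |bb μ ψ (-(N:ℤ) - 1) x| := abs_sub _ _
          _ ≤ 4 * μ * ‖ψ x‖ ^ 2 := by linarith
      · apply ContinuousOn.intervalIntegrable
        rw [uIcc_of_le ht]
        apply ContinuousOn.mul continuousOn_const
        exact ((hψcont.mono Icc_subset_Ici_self).norm.pow 2)
      · filter_upwards with x
        intro hx
        exact hkey x
    simpa using hmain
  -- convergence of partial sums to Pdef
  have hlimF : ∀ s : ℝ, Tendsto (fun N : ℕ => F N s) atTop (𝓝 (Pdef μ (ψ s))) := by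
    intro s
    have hsum := summable_log μ hμ (ψ s)
    exact hsum.hasSum.comp tendsto_IccZ
  have h1 : Tendsto (fun N : ℕ => F N t - F N 0) atTop
      (𝓝 (Pdef μ (ψ t) - Pdef μ (ψ 0))) := (hlimF t).sub (hlimF 0)
  have h2 : Tendsto (fun N : ℕ => F N t - F N 0) atTop (𝓝 0) := by
    apply hlim0.congr
    intro N
    exact hFTC N
  have := tendsto_nhds_unique h1 h2
  linarith

end ALaux

/-- For a solution `ψ` of the AL lattice on `[0,∞)`, the `ℓ²` norm satisfies
`μ‖ψ(t)‖² ≤ exp(P_μ(ψ(0))) − 1` for all `t ≥ 0`. -/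
theorem AL_l2_bound (μ : ℝ) (hμ : 0 < μ) (ψ ψ' : ℝ → l2)
    (hψ : IsALSol μ (Ici 0) ψ ψ') :
    ∀ t : ℝ, 0 ≤ t → μ * ‖ψ t‖ ^ 2 ≤ Real.exp (Pdef μ (ψ 0)) - 1 := by
  intro t ht
  have h := ALaux.partA μ hμ (ψ t)
  rwa [ALaux.conserve μ hμ ψ ψ' hψ t ht] at h
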